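/- Fix k < n. Let v_{ij} satisfy the quantum increasing sequence relations in a unital C*-algebra A (with conventions v_{00} = 1 and v_{i0} = v_{0i} = v_{i(k+1)} = 0 for i ≥ 1), and define u_{ij} (1 ≤ i,j ≤ n) by u_{ij} = v_{ij} for j ≤ k; u_{i(k+m)} = 0 unless m ≤ i ≤ m+k; u_{(m+p)(k+m)} = Σ_{i=0}^{m+p-1} (v_{ip} - v_{(i+1)(p+1)}). Then every row of (u_{ij}) sums to 1: Σ_{j=1}^n u_{ij} = 1 for each 1 ≤ i ≤ n. Consequently (u_{ij}) is a magic unitary. -/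

import Mathlib

/-- Extension of quantum increasing sequences to quantum permutations (statement 9). -/
theorem stmt_9 {A : Type*} [NormedRing A] [StarRing A] [CStarRing A]
    [CompleteSpace A] [NormedAlgebra ℂ A] [StarModule ℂ A]
    (n k : ℕ) (hkn : k < n) (v : ℕ → ℕ → A)
    (hproj : ∀ i j, 1 ≤ i → i ≤ n → 1 ≤ j → j ≤ k →
      star (v i j) = v i j ∧ v i j * v i j = v i j)
    (hcol : ∀ j, 1 ≤ j → j ≤ k → ∑ i ∈ Finset.Icc 1 n, v i j = 1)
    (hinc : ∀ i i' j j', 1 ≤ i → i ≤ n → 1 ≤ i' → i' ≤ n → 1 ≤ j → j ≤ k →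
      1 ≤ j' → j' ≤ k → j < j' → i' ≤ i → v i j * v i' j' = 0)
    (hv00 : v 0 0 = 1)
    (hconv : ∀ i, 1 ≤ i → v i 0 = 0 ∧ v 0 i = 0 ∧ v i (k + 1) = 0)
    (u : ℕ → ℕ → A)
    (hu1 : ∀ i j, 1 ≤ i → i ≤ n → 1 ≤ j → j ≤ k → u i j = v i j)
    (hu2 : ∀ i m, 1 ≤ i → i ≤ n → 1 ≤ m → m ≤ n - k → (i < m ∨ m + k < i) →
      u i (k + m) = 0)
    (hu3 : ∀ m p, 1 ≤ m → m ≤ n - k → p ≤ k →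
      u (m + p) (k + m) = ∑ i ∈ Finset.range (m + p), (v i p - v (i + 1) (p + 1))) :
    (∀ i, 1 ≤ i → i ≤ n → ∑ j ∈ Finset.Icc 1 n, u i j = 1) ∧
    (∀ i j, 1 ≤ i → i ≤ n → 1 ≤ j → j ≤ n →
      star (u i j) = u i j ∧ u i j * u i j = u i j) ∧
    (∀ j, 1 ≤ j → j ≤ n → ∑ i ∈ Finset.Icc 1 n, u i j = 1) := by
  letI : CStarAlgebra A := { }
  letI := CStarAlgebra.spectralOrder A
  haveI := CStarAlgebra.spectralOrderedRing A
  have h0v : ∀ q, 1 ≤ q → v 0 q = 0 := fun q hq => (hconv q hq).2.1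
  have hv0 : ∀ l, 1 ≤ l → v l 0 = 0 := fun l hl => (hconv l hl).1
  have hk1 : ∀ l, 1 ≤ l → v l (k + 1) = 0 := fun l hl => (hconv l hl).2.2
  -- self-adjointness including conventions
  have hsa : ∀ l q, l ≤ n → q ≤ k + 1 → star (v l q) = v l q := by
    intro l q hl hq
    rcases Nat.eq_zero_or_pos l with rfl | hl1
    · rcases Nat.eq_zero_or_pos q with rfl | hq1
      · rw [hv00]; exact star_one A
      · rw [h0v q hq1]; exact star_zero A
    rcases Nat.eq_zero_or_pos q with rfl | hq1
    · rw [hv0 l hl1]; exact star_zero A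
    rcases Nat.lt_or_ge q (k + 1) with h | h
    · exact (hproj l q hl1 hl hq1 (by omega)).1
    · have hqk : q = k + 1 := by omega
      rw [hqk, hk1 l hl1]; exact star_zero A
  -- idempotency including conventions
  have hidem : ∀ l q, l ≤ n → q ≤ k → v l q * v l q = v l q := by
    intro l q hl hq
    rcases Nat.eq_zero_or_pos l with rfl | hl1
    · rcases Nat.eq_zero_or_pos q with rfl | hq1
      · rw [hv00]; exact one_mul 1
      · rw [h0v q hq1]; exact mul_zero 0
    rcases Nat.eq_zero_or_pos q with rfl | hq1
    · rw [hv0 l hl1]; exact mul_zero 0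
    exact (hproj l q hl1 hl hq1 hq).2
  -- same-column orthogonality, C* argument
  have hOrth0 : ∀ q, 1 ≤ q → q ≤ k → ∀ a, 1 ≤ a → a ≤ n → ∀ b, 1 ≤ b → b ≤ n → b ≠ a →
      v b q * v a q = 0 := by
    intro q hq1 hq2 a ha1 ha2 b hb1 hb2 hba
    have hamem : a ∈ Finset.Icc 1 n := Finset.mem_Icc.mpr ⟨ha1, ha2⟩
    have hsum : ∑ i ∈ Finset.Icc 1 n, v a q * (v i q * v a q) = v a q := by
      rw [← Finset.mul_sum, ← Finset.sum_mul, hcol q hq1 hq2, one_mul,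
        (hproj a q ha1 ha2 hq1 hq2).2]
    have herase : ∑ i ∈ (Finset.Icc 1 n).erase a, v a q * (v i q * v a q) = 0 := by
      have h3 : v a q * (v a q * v a q) = v a q := by
        rw [(hproj a q ha1 ha2 hq1 hq2).2, (hproj a q ha1 ha2 hq1 hq2).2]
      have h2 : v a q + ∑ x ∈ (Finset.Icc 1 n).erase a, v a q * (v x q * v a q) = v a q := by
        calc v a q + ∑ x ∈ (Finset.Icc 1 n).erase a, v a q * (v x q * v a q)
            = v a q * (v a q * v a q)
              + ∑ x ∈ (Finset.Icc 1 n).erase a, v a q * (v x q * v a q) := by rw [h3]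
          _ = ∑ i ∈ Finset.Icc 1 n, v a q * (v i q * v a q) :=
              Finset.add_sum_erase (Finset.Icc 1 n) (fun i => v a q * (v i q * v a q)) hamem
          _ = v a q := hsum
      exact add_eq_left.mp h2
    have hterm : ∀ i ∈ (Finset.Icc 1 n).erase a,
        v a q * (v i q * v a q) = star (v i q * v a q) * (v i q * v a q) := by
      intro i hi
      obtain ⟨hia, hi'⟩ := Finset.mem_erase.mp hi
      obtain ⟨hi1, hi2⟩ := Finset.mem_Icc.mp hi'
      rw [star_mul, hsa i q hi2 (by omega), hsa a q ha2 (by omega), mul_assoc,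
        ← mul_assoc (v i q) (v i q) (v a q), hidem i q hi2 hq2]
    rw [Finset.sum_congr rfl hterm] at herase
    have h0 : ∀ i ∈ (Finset.Icc 1 n).erase a,
        (0 : A) ≤ star (v i q * v a q) * (v i q * v a q) := fun i _ => star_mul_self_nonneg _
    have hz := (Finset.sum_eq_zero_iff_of_nonneg h0).mp herase b
      (Finset.mem_erase.mpr ⟨hba, Finset.mem_Icc.mpr ⟨hb1, hb2⟩⟩)
    exact (CStarRing.star_mul_self_eq_zero_iff _).mp hz
  -- full same-column orthogonality including conventions
  have horth : ∀ q, q ≤ k → ∀ a b, a ≤ n → b ≤ n → a ≠ b → v a q * v b q = 0 := by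
    intro q hq a b ha hb hab
    rcases Nat.eq_zero_or_pos q with rfl | hq1
    · rcases Nat.eq_zero_or_pos a with rfl | ha1
      · rw [hv0 b (by omega), mul_zero]
      · rw [hv0 a ha1, zero_mul]
    rcases Nat.eq_zero_or_pos a with rfl | ha1
    · rw [h0v q hq1, zero_mul]
    rcases Nat.eq_zero_or_pos b with rfl | hb1
    · rw [h0v q hq1, mul_zero]
    exact hOrth0 q hq1 hq b hb1 hb a ha1 ha hab
  -- sums of distinct same-column elements are idempotent
  have hsumproj : ∀ (q : ℕ), q ≤ k → ∀ (f : ℕ → ℕ) (s : Finset ℕ),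
      (∀ x ∈ s, f x ≤ n) → (∀ x ∈ s, ∀ y ∈ s, f x = f y → x = y) →
      (∑ x ∈ s, v (f x) q) * (∑ x ∈ s, v (f x) q) = ∑ x ∈ s, v (f x) q := by
    intro q hq f s hfn hinj
    rw [Finset.sum_mul_sum]
    apply Finset.sum_congr rfl
    intro x hx
    rw [Finset.sum_eq_single_of_mem x hx
      (fun y hy hyx => horth q hq (f x) (f y) (hfn x hx) (hfn y hy)
        (fun h => hyx (hinj y hy x hx h.symm)))]
    exact hidem (f x) q (hfn x hx) hq
  -- telescoping over Icc
  have htel : ∀ (f : ℕ → A) (a b : ℕ), a ≤ b + 1 →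
      ∑ p ∈ Finset.Icc a b, (f p - f (p + 1)) = f a - f (b + 1) := by
    intro f a b hab
    have h2 : a + (b + 1 - a) = b + 1 := by omega
    calc ∑ p ∈ Finset.Icc a b, (f p - f (p + 1))
        = ∑ t ∈ Finset.range (b + 1 - a), (f (a + t) - f (a + (t + 1))) := by
          rw [← Finset.Ico_add_one_right_eq_Icc, Finset.sum_Ico_eq_sum_range]
          rfl
      _ = f (a + 0) - f (a + (b + 1 - a)) := Finset.sum_range_sub' (fun s => f (a + s)) _
      _ = f a - f (b + 1) := by rw [h2, Nat.add_zero]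
  -- vanishing above the diagonal
  have hA : ∀ j, j ≤ k → ∀ i, i ≤ n → i < j → v i j = 0 := by
    intro j
    induction j with
    | zero => intro _ i _ hij; omega
    | succ j ih =>
      intro hjk i hin hij
      rcases Nat.eq_zero_or_pos i with rfl | hi1
      · exact h0v (j + 1) (by omega)
      have hj1 : 1 ≤ j := by omega
      have h1 : v i (j + 1) = ∑ i' ∈ Finset.Icc 1 n, v i' j * v i (j + 1) := by
        rw [← Finset.sum_mul, hcol j hj1 (by omega), one_mul]
      rw [h1]
      apply Finset.sum_eq_zero
      intro i' hi'
      obtain ⟨h1', h2'⟩ := Finset.mem_Icc.mp hi'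
      rcases Nat.lt_or_ge i' i with h | h
      · rw [ih (by omega) i' h2' (by omega), zero_mul]
      · exact hinc i' i j (j + 1) h1' h2' hi1 hin hj1 (by omega) (by omega) hjk (by omega) h
  -- vanishing below the band
  have hB : ∀ d j, j + d = k → 1 ≤ j → ∀ i, i ≤ n → n - k + j < i → v i j = 0 := by
    intro d
    induction d with
    | zero => intro j hj _ i hin hni; exfalso; omega
    | succ d ih =>
      intro j hjd hj1 i hin hni
      have hi1 : 1 ≤ i := by omega
      have hjk : j + 1 ≤ k := by omega
      have h1 : v i j = ∑ i' ∈ Finset.Icc 1 n, v i j * v i' (j + 1) := by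
        rw [← Finset.mul_sum, hcol (j + 1) (by omega) hjk, mul_one]
      rw [h1]
      apply Finset.sum_eq_zero
      intro i' hi'
      obtain ⟨h1', h2'⟩ := Finset.mem_Icc.mp hi'
      rcases le_or_gt i' i with h | h
      · exact hinc i i' j (j + 1) hi1 hin h1' h2' hj1 (by omega) (by omega) hjk (by omega) h
      · rw [ih (j + 1) (by omega) (by omega) i' h2' (by omega), mul_zero]
  -- column 0 partial sums are 1
  have hP1 : ∀ r, 1 ≤ r → (∑ l ∈ Finset.range r, v l 0) = 1 := by
    intro r hr
    rw [Finset.sum_eq_single_of_mem 0 (Finset.mem_range.mpr (by omega))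
      (fun l _ hl => hv0 l (by omega))]
    exact hv00
  -- column k+1 shifted partial sums are 0
  have hQk : ∀ r, (∑ l ∈ Finset.range r, v (l + 1) (k + 1)) = 0 := by
    intro r
    exact Finset.sum_eq_zero (fun l _ => hk1 (l + 1) (by omega))
  -- Q * P = Q in the main case
  have hQP : ∀ r p, 1 ≤ p → p + 1 ≤ k → r ≤ n →
      (∑ l ∈ Finset.range r, v (l + 1) (p + 1)) * (∑ l ∈ Finset.range r, v l p)
        = ∑ l ∈ Finset.range r, v (l + 1) (p + 1) := by
    intro r p hp1 hpk hrn
    rw [Finset.sum_mul]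
    apply Finset.sum_congr rfl
    intro l hl
    have hlr : l < r := Finset.mem_range.mp hl
    have hz : ∀ l', l' ≤ n → l < l' → v (l + 1) (p + 1) * v l' p = 0 := by
      intro l' hl'n hll'
      have h0 := hinc l' (l + 1) p (p + 1) (by omega) hl'n (by omega) (by omega) hp1
        (by omega) (by omega) hpk (by omega) (by omega)
      calc v (l + 1) (p + 1) * v l' p = star (v l' p * v (l + 1) (p + 1)) := by
            rw [star_mul, hsa l' p hl'n (by omega), hsa (l + 1) (p + 1) (by omega) (by omega)]
        _ = 0 := by rw [h0, star_zero]
    have e1 : ∑ l' ∈ Finset.range r, v (l + 1) (p + 1) * v l' p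
        = ∑ l' ∈ Finset.Icc 1 l, v (l + 1) (p + 1) * v l' p := by
      symm; apply Finset.sum_subset
      · intro x hx; obtain ⟨hx1, hx2⟩ := Finset.mem_Icc.mp hx
        exact Finset.mem_range.mpr (by omega)
      · intro x hx hnx
        have hxr := Finset.mem_range.mp hx
        rcases Nat.eq_zero_or_pos x with rfl | hx1
        · rw [h0v p hp1, mul_zero]
        · have hlx : l < x := by
            by_contra hc; exact hnx (Finset.mem_Icc.mpr ⟨hx1, by omega⟩)
          exact hz x (by omega) hlx
    have e2 : ∑ l' ∈ Finset.Icc 1 n, v (l + 1) (p + 1) * v l' p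
        = ∑ l' ∈ Finset.Icc 1 l, v (l + 1) (p + 1) * v l' p := by
      symm; apply Finset.sum_subset
      · intro x hx; obtain ⟨hx1, hx2⟩ := Finset.mem_Icc.mp hx
        exact Finset.mem_Icc.mpr ⟨hx1, by omega⟩
      · intro x hx hnx
        obtain ⟨hx1, hx2⟩ := Finset.mem_Icc.mp hx
        have hlx : l < x := by
          by_contra hc; exact hnx (Finset.mem_Icc.mpr ⟨hx1, by omega⟩)
        exact hz x hx2 hlx
    rw [Finset.mul_sum, e1, ← e2, ← Finset.mul_sum, hcol p hp1 (by omega), mul_one]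
  -- the new columns consist of projections
  have hSproj : ∀ m p, 1 ≤ m → m ≤ n - k → p ≤ k →
      star (u (m + p) (k + m)) = u (m + p) (k + m) ∧
      u (m + p) (k + m) * u (m + p) (k + m) = u (m + p) (k + m) := by
    intro m p hm1 hm2 hpk
    have hrn : m + p ≤ n := by omega
    rw [hu3 m p hm1 hm2 hpk]
    have hsplit : ∑ l ∈ Finset.range (m + p), (v l p - v (l + 1) (p + 1))
        = (∑ l ∈ Finset.range (m + p), v l p) - ∑ l ∈ Finset.range (m + p), v (l + 1) (p + 1) :=
      Finset.sum_sub_distrib _ _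
    rw [hsplit]
    have hPsa : star (∑ l ∈ Finset.range (m + p), v l p) = ∑ l ∈ Finset.range (m + p), v l p := by
      rw [star_sum]
      apply Finset.sum_congr rfl
      intro l hl
      have := Finset.mem_range.mp hl
      exact hsa l p (by omega) (by omega)
    have hQsa : star (∑ l ∈ Finset.range (m + p), v (l + 1) (p + 1))
        = ∑ l ∈ Finset.range (m + p), v (l + 1) (p + 1) := by
      rw [star_sum]
      apply Finset.sum_congr rfl
      intro l hl
      have := Finset.mem_range.mp hl
      exact hsa (l + 1) (p + 1) (by omega) (by omega)
    have hPP : (∑ l ∈ Finset.range (m + p), v l p) * (∑ l ∈ Finset.range (m + p), v l p)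
        = ∑ l ∈ Finset.range (m + p), v l p := by
      exact hsumproj p hpk (fun x => x) (Finset.range (m + p))
        (fun x hx => by have := Finset.mem_range.mp hx; show x ≤ n; omega)
        (fun x _ y _ h => h)
    constructor
    · rw [star_sub, hPsa, hQsa]
    rcases Nat.lt_or_ge p k with hplt | hpge
    · have hQQ : (∑ l ∈ Finset.range (m + p), v (l + 1) (p + 1)) *
          (∑ l ∈ Finset.range (m + p), v (l + 1) (p + 1))
          = ∑ l ∈ Finset.range (m + p), v (l + 1) (p + 1) := by
        exact hsumproj (p + 1) (by omega) (fun x => x + 1) (Finset.range (m + p))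
          (fun x hx => by have := Finset.mem_range.mp hx; show x + 1 ≤ n; omega)
          (fun x _ y _ h => by have h' : x + 1 = y + 1 := h; omega)
      have hQPe : (∑ l ∈ Finset.range (m + p), v (l + 1) (p + 1)) *
          (∑ l ∈ Finset.range (m + p), v l p)
          = ∑ l ∈ Finset.range (m + p), v (l + 1) (p + 1) := by
        rcases Nat.eq_zero_or_pos p with rfl | hp1
        · rw [hP1 (m + 0) (by omega), mul_one]
        · exact hQP (m + p) p hp1 (by omega) hrn
      have hPQe : (∑ l ∈ Finset.range (m + p), v l p) *
          (∑ l ∈ Finset.range (m + p), v (l + 1) (p + 1))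
          = ∑ l ∈ Finset.range (m + p), v (l + 1) (p + 1) := by
        calc (∑ l ∈ Finset.range (m + p), v l p) *
              (∑ l ∈ Finset.range (m + p), v (l + 1) (p + 1))
            = star (star (∑ l ∈ Finset.range (m + p), v (l + 1) (p + 1)) *
                star (∑ l ∈ Finset.range (m + p), v l p)) := by
              rw [star_mul, star_star, star_star]
          _ = star ((∑ l ∈ Finset.range (m + p), v (l + 1) (p + 1)) *
                (∑ l ∈ Finset.range (m + p), v l p)) := by rw [hPsa, hQsa]
          _ = ∑ l ∈ Finset.range (m + p), v (l + 1) (p + 1) := by rw [hQPe, hQsa]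
      have hexp : ((∑ l ∈ Finset.range (m + p), v l p) -
            ∑ l ∈ Finset.range (m + p), v (l + 1) (p + 1)) *
          ((∑ l ∈ Finset.range (m + p), v l p) -
            ∑ l ∈ Finset.range (m + p), v (l + 1) (p + 1))
          = (∑ l ∈ Finset.range (m + p), v l p) * (∑ l ∈ Finset.range (m + p), v l p)
            - (∑ l ∈ Finset.range (m + p), v l p) *
              (∑ l ∈ Finset.range (m + p), v (l + 1) (p + 1))
            - ((∑ l ∈ Finset.range (m + p), v (l + 1) (p + 1)) *
                (∑ l ∈ Finset.range (m + p), v l p)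
              - (∑ l ∈ Finset.range (m + p), v (l + 1) (p + 1)) *
                (∑ l ∈ Finset.range (m + p), v (l + 1) (p + 1))) := by
        rw [sub_mul, mul_sub, mul_sub]
      rw [hexp, hPP, hPQe, hQPe, hQQ, sub_self, sub_zero]
    · have hpk' : p = k := by omega
      have hQ0 : ∑ l ∈ Finset.range (m + p), v (l + 1) (p + 1) = 0 := by
        rw [hpk']; exact hQk (m + k)
      rw [hQ0, sub_zero]
      exact hPP
  -- Part 1 : row sums
  have part1 : ∀ i, 1 ≤ i → i ≤ n → ∑ j ∈ Finset.Icc 1 n, u i j = 1 := by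
    intro i hi1 hin
    set a := i - (n - k) with ha
    set b := min k (i - 1) with hb
    have hsplitcols : ∑ j ∈ Finset.Icc 1 n, u i j
        = (∑ j ∈ Finset.Icc 1 k, u i j) + ∑ t ∈ Finset.range (n - k), u i (k + (t + 1)) := by
      rw [← Finset.Ico_add_one_right_eq_Icc,
        ← Finset.sum_Ico_consecutive (fun j => u i j) (show 1 ≤ k + 1 by omega)
          (show k + 1 ≤ n + 1 by omega), Finset.Ico_add_one_right_eq_Icc]
      congr 1
      rw [Finset.sum_Ico_eq_sum_range]
      have hnk : n + 1 - (k + 1) = n - k := by omega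
      rw [hnk]
      apply Finset.sum_congr rfl
      intro t _
      congr 1
      omega
    have hfirst : ∑ j ∈ Finset.Icc 1 k, u i j = ∑ j ∈ Finset.Icc 1 k, v i j :=
      Finset.sum_congr rfl (fun j hj => by
        obtain ⟨h1, h2⟩ := Finset.mem_Icc.mp hj; exact hu1 i j hi1 hin h1 h2)
    have step1 : ∑ t ∈ Finset.range (n - k), u i (k + (t + 1))
        = ∑ t ∈ (Finset.range (n - k)).filter (fun t => i - k ≤ t + 1 ∧ t + 1 ≤ i),
            u i (k + (t + 1)) := by
      symm; apply Finset.sum_subset (Finset.filter_subset _ _)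
      intro t ht hnt
      have htr := Finset.mem_range.mp ht
      have hcond : ¬(i - k ≤ t + 1 ∧ t + 1 ≤ i) := fun hc =>
        hnt (Finset.mem_filter.mpr ⟨ht, hc⟩)
      exact hu2 i (t + 1) hi1 hin (by omega) (by omega) (by omega)
    have step2 : ∑ t ∈ (Finset.range (n - k)).filter (fun t => i - k ≤ t + 1 ∧ t + 1 ≤ i),
          u i (k + (t + 1))
        = ∑ p ∈ Finset.Icc a b, ∑ l ∈ Finset.range i, (v l p - v (l + 1) (p + 1)) := by
      apply Finset.sum_nbij' (fun t => i - (t + 1)) (fun p => i - p - 1)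
      · intro t ht
        rw [Finset.mem_filter, Finset.mem_range] at ht
        exact Finset.mem_Icc.mpr ⟨by omega, by omega⟩
      · intro p hp
        obtain ⟨hp1, hp2⟩ := Finset.mem_Icc.mp hp
        rw [Finset.mem_filter, Finset.mem_range]
        omega
      · intro t ht
        rw [Finset.mem_filter, Finset.mem_range] at ht
        omega
      · intro p hp
        obtain ⟨hp1, hp2⟩ := Finset.mem_Icc.mp hp
        omega
      · intro t ht
        rw [Finset.mem_filter, Finset.mem_range] at ht
        have hm : (t + 1) + (i - (t + 1)) = i := by omega
        have h3 := hu3 (t + 1) (i - (t + 1)) (by omega) (by omega) (by omega)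
        rw [hm] at h3
        exact h3
    have hinner : ∀ p ∈ Finset.Icc a b,
        ∑ l ∈ Finset.range i, (v l p - v (l + 1) (p + 1))
        = ((∑ l ∈ Finset.range i, v l p) - ∑ l ∈ Finset.range i, v l (p + 1)) - v i (p + 1) := by
      intro p _
      have e : ∑ l ∈ Finset.range i, v (l + 1) (p + 1)
          = ∑ l ∈ Finset.range i, v l (p + 1) + v i (p + 1) := by
        calc ∑ l ∈ Finset.range i, v (l + 1) (p + 1)
            = (∑ l ∈ Finset.range i, v (l + 1) (p + 1)) + v 0 (p + 1) := by
              rw [h0v (p + 1) (by omega), add_zero]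
          _ = ∑ l ∈ Finset.range (i + 1), v l (p + 1) := (Finset.sum_range_succ' (fun l => v l (p + 1)) i).symm
          _ = ∑ l ∈ Finset.range i, v l (p + 1) + v i (p + 1) := Finset.sum_range_succ _ i
      rw [Finset.sum_sub_distrib, e]
      abel
    have hmain : ∑ p ∈ Finset.Icc a b, ∑ l ∈ Finset.range i, (v l p - v (l + 1) (p + 1))
        = ((∑ l ∈ Finset.range i, v l a) - ∑ l ∈ Finset.range i, v l (b + 1))
          - ∑ p ∈ Finset.Icc a b, v i (p + 1) := by
      rw [Finset.sum_congr rfl hinner, Finset.sum_sub_distrib]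
      congr 1
      exact htel (fun q => ∑ l ∈ Finset.range i, v l q) a b (by omega)
    have hTb1 : ∑ l ∈ Finset.range i, v l (b + 1) = 0 := by
      apply Finset.sum_eq_zero
      intro l hl
      have hli := Finset.mem_range.mp hl
      rcases Nat.eq_zero_or_pos l with rfl | hl1
      · exact h0v (b + 1) (by omega)
      rcases Nat.lt_or_ge (b + 1) (k + 1) with hc | hc
      · exact hA (b + 1) (by omega) l (by omega) (by omega)
      · have hbk : b + 1 = k + 1 := by omega
        rw [hbk]; exact hk1 l hl1
    have hTa : ∑ l ∈ Finset.range i, v l a = 1 - ∑ q ∈ Finset.Icc (max a 1) a, v i q := by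
      rcases Nat.eq_zero_or_pos a with ha0 | ha1
      · rw [ha0]
        have hemp : Finset.Icc (max 0 1) 0 = ∅ := Finset.Icc_eq_empty (by omega)
        rw [hemp, Finset.sum_empty, sub_zero]
        exact hP1 i hi1
      · have hmax : max a 1 = a := by omega
        rw [hmax, Finset.Icc_self, Finset.sum_singleton]
        have hak : a ≤ k := by omega
        have e0 : ∑ l ∈ Finset.range i, v l a = ∑ l ∈ Finset.Ico 1 i, v l a := by
          symm; apply Finset.sum_subset
          · intro x hx; obtain ⟨h1x, h2x⟩ := Finset.mem_Ico.mp hx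
            exact Finset.mem_range.mpr (by omega)
          · intro x hx hnx
            have hx0 : x = 0 := by
              have := Finset.mem_range.mp hx
              by_contra hc
              exact hnx (Finset.mem_Ico.mpr ⟨by omega, by omega⟩)
            rw [hx0]; exact h0v a ha1
        have e1 : (∑ l ∈ Finset.Ico 1 i, v l a) + ∑ l ∈ Finset.Ico i (n + 1), v l a
            = ∑ l ∈ Finset.Ico 1 (n + 1), v l a :=
          Finset.sum_Ico_consecutive _ (by omega) (by omega)
        have e2 : ∑ l ∈ Finset.Ico 1 (n + 1), v l a = 1 := by
          rw [Finset.Ico_add_one_right_eq_Icc]; exact hcol a ha1 hak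
        have e3 : ∑ l ∈ Finset.Ico i (n + 1), v l a = v i a := by
          rw [Finset.sum_eq_single_of_mem i (Finset.mem_Ico.mpr ⟨le_refl i, by omega⟩)]
          intro x hx hxi
          obtain ⟨h1x, h2x⟩ := Finset.mem_Ico.mp hx
          exact hB (k - a) a (by omega) ha1 x (by omega) (by omega)
        rw [e2, e3] at e1
        rw [e0]
        exact eq_sub_of_add_eq e1
    have hshift : ∑ p ∈ Finset.Icc a b, v i (p + 1)
        = ∑ q ∈ Finset.Icc (a + 1) (b + 1), v i q := by
      rw [← Finset.Ico_add_one_right_eq_Icc, ← Finset.Ico_add_one_right_eq_Icc, Finset.sum_Ico_eq_sum_range,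
        Finset.sum_Ico_eq_sum_range]
      have hn1 : b + 1 - a = b + 1 + 1 - (a + 1) := by omega
      rw [hn1]
      apply Finset.sum_congr rfl
      intro t _
      congr 1
      omega
    have hcomb : (∑ q ∈ Finset.Icc (max a 1) a, v i q) + ∑ q ∈ Finset.Icc (a + 1) (b + 1), v i q
        = ∑ q ∈ Finset.Icc (max a 1) (b + 1), v i q := by
      rw [← Finset.Ico_add_one_right_eq_Icc, ← Finset.Ico_add_one_right_eq_Icc, ← Finset.Ico_add_one_right_eq_Icc]
      exact Finset.sum_Ico_consecutive _ (by omega) (by omega)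
    have hX : ∑ j ∈ Finset.Icc 1 k, v i j = ∑ q ∈ Finset.Icc (max a 1) (b + 1), v i q := by
      have c1 : ∑ j ∈ Finset.Icc 1 k, v i j
          = ∑ j ∈ Finset.Icc (max a 1) (min (b + 1) k), v i j := by
        symm; apply Finset.sum_subset
        · intro x hx; obtain ⟨h1x, h2x⟩ := Finset.mem_Icc.mp hx
          exact Finset.mem_Icc.mpr ⟨by omega, by omega⟩
        · intro x hx hnx
          obtain ⟨h1x, h2x⟩ := Finset.mem_Icc.mp hx
          have hxcond : x < max a 1 ∨ min (b + 1) k < x := by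
            by_contra hc
            push_neg at hc
            exact hnx (Finset.mem_Icc.mpr ⟨hc.1, hc.2⟩)
          rcases hxcond with hxa | hxb
          · exact hB (k - x) x (by omega) h1x i hin (by omega)
          · exact hA x h2x i hin (by omega)
      have c2 : ∑ q ∈ Finset.Icc (max a 1) (b + 1), v i q
          = ∑ j ∈ Finset.Icc (max a 1) (min (b + 1) k), v i j := by
        symm; apply Finset.sum_subset
        · intro x hx; obtain ⟨h1x, h2x⟩ := Finset.mem_Icc.mp hx
          exact Finset.mem_Icc.mpr ⟨h1x, by omega⟩
        · intro x hx hnx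
          obtain ⟨h1x, h2x⟩ := Finset.mem_Icc.mp hx
          have hxk : x = k + 1 := by
            by_contra hc
            exact hnx (Finset.mem_Icc.mpr ⟨h1x, by omega⟩)
          rw [hxk]; exact hk1 i hi1
      rw [c1, c2]
    rw [hsplitcols, hfirst, step1, step2, hmain, hTa, hTb1, sub_zero, hshift, hX, ← hcomb]
    abel
  -- Part 2 : entries are projections
  have part2 : ∀ i j, 1 ≤ i → i ≤ n → 1 ≤ j → j ≤ n →
      star (u i j) = u i j ∧ u i j * u i j = u i j := by
    intro i j hi1 hin hj1 hjn
    rcases le_or_gt j k with hjk | hjk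
    · rw [hu1 i j hi1 hin hj1 hjk]
      exact hproj i j hi1 hin hj1 hjk
    · have hm1 : 1 ≤ j - k := by omega
      have hm2 : j - k ≤ n - k := by omega
      have hjm : j = k + (j - k) := by omega
      rcases Nat.lt_or_ge i (j - k) with hlt | hge
      · rw [hjm, hu2 i (j - k) hi1 hin hm1 hm2 (Or.inl hlt)]
        exact ⟨star_zero A, mul_zero 0⟩
      rcases Nat.lt_or_ge ((j - k) + k) i with hgt | hle
      · rw [hjm, hu2 i (j - k) hi1 hin hm1 hm2 (Or.inr hgt)]
        exact ⟨star_zero A, mul_zero 0⟩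
      · have hip : i = (j - k) + (i - (j - k)) := by omega
        have hres := hSproj (j - k) (i - (j - k)) hm1 hm2 (by omega)
        rw [hjm, hip]
        exact hres
  -- Part 3 : column sums
  have part3 : ∀ j, 1 ≤ j → j ≤ n → ∑ i' ∈ Finset.Icc 1 n, u i' j = 1 := by
    intro j hj1 hjn
    rcases le_or_gt j k with hjk | hjk
    · rw [Finset.sum_congr rfl (fun x hx => by
        obtain ⟨h1, h2⟩ := Finset.mem_Icc.mp hx; exact hu1 x j h1 h2 hj1 hjk)]
      exact hcol j hj1 hjk
    · set m := j - k with hm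
      have hm1 : 1 ≤ m := by omega
      have hm2 : m ≤ n - k := by omega
      have hjm : j = k + m := by omega
      rw [hjm]
      have r1 : ∑ x ∈ Finset.Icc 1 n, u x (k + m) = ∑ x ∈ Finset.Icc m (m + k), u x (k + m) := by
        symm; apply Finset.sum_subset
        · intro x hx; obtain ⟨h1, h2⟩ := Finset.mem_Icc.mp hx
          exact Finset.mem_Icc.mpr ⟨by omega, by omega⟩
        · intro x hx hnx
          obtain ⟨h1, h2⟩ := Finset.mem_Icc.mp hx
          have hcond : ¬(m ≤ x ∧ x ≤ m + k) := fun hc => hnx (Finset.mem_Icc.mpr hc)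
          exact hu2 x m h1 h2 hm1 hm2 (by omega)
      have r2 : ∑ x ∈ Finset.Icc m (m + k), u x (k + m)
          = ∑ p ∈ Finset.range (k + 1), u (m + p) (k + m) := by
        rw [← Finset.Ico_add_one_right_eq_Icc, Finset.sum_Ico_eq_sum_range]
        have hr : m + k + 1 - m = k + 1 := by omega
        rw [hr]
      have r3 : ∀ p ∈ Finset.range (k + 1), u (m + p) (k + m)
          = (∑ l ∈ Finset.range (m + p), v l p) - ∑ l ∈ Finset.range (m + (p + 1)), v l (p + 1) := by
        intro p hp
        have hpk := Nat.lt_succ_iff.mp (Finset.mem_range.mp hp)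
        rw [hu3 m p hm1 hm2 hpk, Finset.sum_sub_distrib]
        congr 1
        calc ∑ l ∈ Finset.range (m + p), v (l + 1) (p + 1)
            = (∑ l ∈ Finset.range (m + p), v (l + 1) (p + 1)) + v 0 (p + 1) := by
              rw [h0v (p + 1) (by omega), add_zero]
          _ = ∑ l ∈ Finset.range (m + p + 1), v l (p + 1) := (Finset.sum_range_succ' (fun l => v l (p + 1)) (m + p)).symm
          _ = ∑ l ∈ Finset.range (m + (p + 1)), v l (p + 1) := rfl
      rw [r1, r2, Finset.sum_congr rfl r3]
      have tele : ∑ p ∈ Finset.range (k + 1),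
            ((∑ l ∈ Finset.range (m + p), v l p) - ∑ l ∈ Finset.range (m + (p + 1)), v l (p + 1))
          = (∑ l ∈ Finset.range (m + 0), v l 0) - ∑ l ∈ Finset.range (m + (k + 1)), v l (k + 1) :=
        Finset.sum_range_sub' (fun p => ∑ l ∈ Finset.range (m + p), v l p) (k + 1)
      rw [tele, hP1 (m + 0) (by omega)]
      have z1 : ∑ l ∈ Finset.range (m + (k + 1)), v l (k + 1) = 0 :=
        Finset.sum_eq_zero (fun l _ => by
          rcases Nat.eq_zero_or_pos l with rfl | h
          · exact h0v (k + 1) (by omega)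
          · exact hk1 l h)
      rw [z1, sub_zero]
  exact ⟨part1, part2, part3⟩
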